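/- arXiv:1205.6066 — 6 statements merged into one kernel-verified Lean document; each statement's English description precedes it below -/
import Mathlib

section
/- For every object B of 𝒞, the map ψ_B : Hom_𝒞(A⟨M,α⟩, B) → h_{A,α}(B) sending a morphism κ to the pair (j̄ ≫ κ, θ · U κ) is a bijection; that is, the object A⟨M,α⟩ together with the element (j̄, θ) ∈ h_{A,α}(A⟨M,α⟩) represents the functor h_{A,α} : 𝒞 → Set. -/
open CategoryTheory CategoryTheory.Limits CochainComplex CochainComplex.HomComplex

noncomputable section

universe u

/-- The category `dg^S` of `S`-indexed families of cochain complexes of `k`-modules. -/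
abbrev DGS (k : Type u) [CommRing k] (S : Type u) : Type _ :=
  S → CochainComplex (ModuleCat.{u} k) ℤ

variable {k : Type u} [CommRing k] {S : Type u}

namespace DGS

/-- The componentwise mapping cone of a morphism of `DGS k S`. -/
def coneFun {M N : DGS k S} (α : M ⟶ N) : DGS k S :=
  fun x => CochainComplex.mappingCone (α x)

/-- The inclusion of the second summand into the componentwise mapping cone. -/
def coneInr {M N : DGS k S} (α : M ⟶ N) : N ⟶ coneFun α :=
  fun x => CochainComplex.mappingCone.inr (α x)

/-- Componentwise shift. -/
def shift (M : DGS k S) (a : ℤ) : DGS k S := fun x => (M x)⟦a⟧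

/-- The componentwise mapping cone of the identity. -/
def coneId (N : DGS k S) : DGS k S := coneFun (𝟙 N)

/-- The inclusion of the second summand in the cone of the identity. -/
def coneIdInr (N : DGS k S) : N ⟶ coneId N := coneInr (𝟙 N)

/-- `M : DGS k S` consists of free modules with zero differential. -/
def IsFree (M : DGS k S) : Prop :=
  (∀ (x : S) (n m : ℤ), (M x).d n m = 0) ∧ ∀ (x : S) (n : ℤ), Module.Free k ((M x).X n)

/-- A family `t` of degree `-1` maps `M ⟶ B` satisfies `t d + d t = β` (componentwise). -/
def IsNullHomotopy {M B : DGS k S} (β : M ⟶ B)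
    (t : ∀ x : S, Cochain (M x) (B x) (-1)) : Prop :=
  ∀ x : S, δ (-1) 0 (t x) = Cochain.ofHom (β x)

end DGS

variable {𝒞 : Type (u + 1)} [Category.{u} 𝒞] [HasLimits 𝒞] [HasColimits 𝒞]
  (F : DGS k S ⥤ 𝒞) (U : 𝒞 ⥤ DGS k S) (adj : F ⊣ U)

/-- The degree `-1` family of maps `θ : M → U(A⟨M,α⟩)`. -/
def theta {M : DGS k S} {A : 𝒞} (α : M ⟶ U.obj A) {D : 𝒞}
    (g : F.obj (DGS.coneFun α) ⟶ D) (x : S) : Cochain (M x) ((U.obj D) x) (-1) :=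
  (mappingCone.inl (α x)).comp
    (Cochain.ofHom ((adj.unit.app (DGS.coneFun α) ≫ U.map g) x)) (add_zero (-1))

/-- The complex `k` concentrated in degree `0`. -/
def unitComplex (k : Type u) [CommRing k] : CochainComplex (ModuleCat.{u} k) ℤ :=
  (HomologicalComplex.single (ModuleCat.{u} k) (ComplexShape.up ℤ) 0).obj (ModuleCat.of k k)

/-- The object `K_x` of `DGS k S`: the cone of the identity of `k` in the component `x`,
and `0` elsewhere. -/
def Kx [DecidableEq S] (x : S) : DGS k S :=
  fun y => if y = x then CochainComplex.mappingCone (𝟙 (unitComplex k))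
    else (HomologicalComplex.single (ModuleCat.{u} k) (ComplexShape.up ℤ) 0).obj
      (ModuleCat.of k PUnit)

/-- `f` is a weak equivalence: `U f` is a componentwise quasi-isomorphism. -/
def IsWeakEq {X Y : 𝒞} (f : X ⟶ Y) : Prop :=
  ∀ x : S, QuasiIso ((U.map f) x)

/-- `f` is a fibration: `U f` is surjective in every degree, in every component. -/
def IsFib {X Y : 𝒞} (f : X ⟶ Y) : Prop :=
  ∀ (x : S) (n : ℤ), Function.Surjective (((U.map f) x).f n)

/-- `f` is a cofibration: it has the left lifting property with respect to all
trivial fibrations. -/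
def IsCof {X Y : 𝒞} (f : X ⟶ Y) : Prop :=
  ∀ ⦃P Q : 𝒞⦄ (y : P ⟶ Q), IsFib U y → IsWeakEq U y → HasLiftingProperty f y



section
variable {M : DGS k S} {A : 𝒞} (α : M ⟶ U.obj A) {D : 𝒞} (jbar : A ⟶ D)
  (g : F.obj (DGS.coneFun α) ⟶ D)

/-- Auxiliary: `inr ≫ (η ≫ U (g ≫ κ)) = U (j̄ ≫ κ)`. -/
lemma key_inr (hcomm : adj.counit.app A ≫ jbar = F.map (DGS.coneInr α) ≫ g)
    {B : 𝒞} (κ : D ⟶ B) :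
    DGS.coneInr α ≫ adj.unit.app (DGS.coneFun α) ≫ U.map (g ≫ κ) = U.map (jbar ≫ κ) := by
  calc DGS.coneInr α ≫ adj.unit.app (DGS.coneFun α) ≫ U.map (g ≫ κ)
      = adj.unit.app (U.obj A) ≫ U.map (F.map (DGS.coneInr α)) ≫ U.map (g ≫ κ) := by
        have h := adj.unit.naturality (DGS.coneInr α)
        dsimp at h
        rw [← Category.assoc, h, Category.assoc]
    _ = adj.unit.app (U.obj A) ≫ U.map ((F.map (DGS.coneInr α) ≫ g) ≫ κ) := by
        simp
    _ = adj.unit.app (U.obj A) ≫ U.map ((adj.counit.app A ≫ jbar) ≫ κ) := by rw [hcomm]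
    _ = U.map (jbar ≫ κ) := by
        simp

/-- Auxiliary: rewriting `θ · U κ` as `inl` composed with a chain map. -/
lemma theta_comp {B : 𝒞} (κ : D ⟶ B) (x : S) :
    (theta F U adj α g x).comp (Cochain.ofHom ((U.map κ) x)) (add_zero (-1)) =
      (mappingCone.inl (α x)).comp
        (Cochain.ofHom ((adj.unit.app (DGS.coneFun α) ≫ U.map (g ≫ κ)) x))
        (add_zero (-1)) := by
  have h : (adj.unit.app (DGS.coneFun α) ≫ U.map g) x ≫ (U.map κ) x
      = (adj.unit.app (DGS.coneFun α) ≫ U.map (g ≫ κ)) x := by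
    rw [U.map_comp]
    rfl
  unfold theta
  rw [Cochain.comp_assoc_of_third_is_zero_cochain]
  erw [← Cochain.ofHom_comp, h]

/-- Lemma 1: the object `D = A⟨M,α⟩` (defined by the pushout square) together with the
element `(j̄, θ)` represents the functor `h_{A,α}`: for every `B`, the map
`ψ_B : 𝒞(D, B) → h_{A,α}(B)`, `κ ↦ (j̄ ≫ κ, θ · U κ)`, is well defined and bijective. -/
theorem AMalpha_represents
    (hpo : IsPushout (adj.counit.app A) (F.map (DGS.coneInr α)) jbar g) (B : 𝒞) :
    (∀ κ : D ⟶ B,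
      DGS.IsNullHomotopy (α ≫ U.map (jbar ≫ κ))
        (fun x => (theta F U adj α g x).comp
          (Cochain.ofHom ((U.map κ) x)) (add_zero (-1)))) ∧
    Function.Injective (fun κ : D ⟶ B =>
      ((jbar ≫ κ,
        fun x => (theta F U adj α g x).comp (Cochain.ofHom ((U.map κ) x)) (add_zero (-1))) :
        (A ⟶ B) × (∀ x : S, Cochain (M x) ((U.obj B) x) (-1)))) ∧
    (∀ (f : A ⟶ B) (t : ∀ x : S, Cochain (M x) ((U.obj B) x) (-1)),
      DGS.IsNullHomotopy (α ≫ U.map f) t →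
      ∃ κ : D ⟶ B, jbar ≫ κ = f ∧
        (fun x => (theta F U adj α g x).comp (Cochain.ofHom ((U.map κ) x)) (add_zero (-1)))
          = t) := by
  have hcomm : adj.counit.app A ≫ jbar = F.map (DGS.coneInr α) ≫ g := hpo.w
  have key : ∀ (κ : D ⟶ B),
      DGS.coneInr α ≫ adj.unit.app (DGS.coneFun α) ≫ U.map (g ≫ κ) = U.map (jbar ≫ κ) :=
    fun κ => key_inr F U adj α jbar g hcomm κ
  refine ⟨?_, ?_, ?_⟩
  · -- well-definedness
    intro κ x
    dsimp only
    rw [theta_comp]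
    erw [δ_comp_ofHom, mappingCone.δ_inl, ← Cochain.ofHom_comp]
    have hx : mappingCone.inr (α x) ≫ (adj.unit.app (DGS.coneFun α) ≫ U.map (g ≫ κ)) x
        = (U.map (jbar ≫ κ)) x := congr_fun (key κ) x
    have hcomp : (α x ≫ mappingCone.inr (α x)) ≫ (adj.unit.app (DGS.coneFun α) ≫ U.map (g ≫ κ)) x
        = (α ≫ U.map (jbar ≫ κ)) x := by
      erw [Category.assoc, hx]
      rfl
    rw [hcomp]
  · -- injectivity
    intro κ₁ κ₂ h
    have h1 : jbar ≫ κ₁ = jbar ≫ κ₂ := congrArg Prod.fst h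
    have h2 := congrArg Prod.snd h
    dsimp only at h2
    apply hpo.hom_ext h1
    have hψ : adj.unit.app (DGS.coneFun α) ≫ U.map (g ≫ κ₁)
        = adj.unit.app (DGS.coneFun α) ≫ U.map (g ≫ κ₂) := by
      funext x
      apply Cochain.ofHom_injective
      erw [mappingCone.ext_cochain_from_iff (α x) (-1) 0 (neg_add_cancel 1)]
      constructor
      · have e1 := congr_fun h2 x
        rw [theta_comp, theta_comp] at e1
        exact e1
      · erw [← Cochain.ofHom_comp, ← Cochain.ofHom_comp]
        have hx1 : mappingCone.inr (α x) ≫ (adj.unit.app (DGS.coneFun α) ≫ U.map (g ≫ κ₁)) x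
            = (U.map (jbar ≫ κ₁)) x := congr_fun (key κ₁) x
        have hx2 : mappingCone.inr (α x) ≫ (adj.unit.app (DGS.coneFun α) ≫ U.map (g ≫ κ₂)) x
            = (U.map (jbar ≫ κ₂)) x := congr_fun (key κ₂) x
        have hXY : mappingCone.inr (α x) ≫ (adj.unit.app (DGS.coneFun α) ≫ U.map (g ≫ κ₁)) x
            = mappingCone.inr (α x) ≫ (adj.unit.app (DGS.coneFun α) ≫ U.map (g ≫ κ₂)) x := by
          rw [hx1, hx2, h1]
        rw [hXY]
    have : (adj.homEquiv _ B) (g ≫ κ₁) = (adj.homEquiv _ B) (g ≫ κ₂) := by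
      rw [adj.homEquiv_unit, adj.homEquiv_unit]
      exact hψ
    exact (adj.homEquiv _ B).injective this
  · -- surjectivity
    intro f t ht
    have hdel : ∀ x : S, δ (-1) 0 (t x) = Cochain.ofHom (α x ≫ (U.map f) x) := ht
    obtain ⟨φ, hφ⟩ : ∃ φ : F.obj (DGS.coneFun α) ⟶ B,
        adj.unit.app (DGS.coneFun α) ≫ U.map φ =
          (fun x => mappingCone.desc (α x) (t x) ((U.map f) x) (hdel x) :
            DGS.coneFun α ⟶ U.obj B) :=
      ⟨(adj.homEquiv _ B).symm
        (fun x => mappingCone.desc (α x) (t x) ((U.map f) x) (hdel x)),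
        (adj.homEquiv _ B).apply_symm_apply _⟩
    have hinr : DGS.coneInr α ≫
        (fun x => mappingCone.desc (α x) (t x) ((U.map f) x) (hdel x) :
          DGS.coneFun α ⟶ U.obj B) = U.map f := by
      funext x
      exact mappingCone.inr_desc _ _ _ _
    have w : adj.counit.app A ≫ f = F.map (DGS.coneInr α) ≫ φ := by
      apply (adj.homEquiv _ B).injective
      rw [adj.homEquiv_naturality_left, adj.homEquiv_unit, adj.homEquiv_unit, hφ, hinr]
      simp
    refine ⟨hpo.desc f φ w, hpo.inl_desc f φ w, ?_⟩
    funext x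
    rw [theta_comp, hpo.inr_desc f φ w, hφ]
    exact mappingCone.inl_desc _ _ _ _

end
end
end

section
/- The chain map α ≫ U j̄ : M ⟶ U(A⟨M,α⟩) is null-homotopic: it equals the boundary θ d + d θ of the degree −1 map θ. In particular, if the differential of M is zero, then for every element m of M the cycle α(m) is sent by U j̄ to the boundary of the element θ(m) of U(A⟨M,α⟩). -/
open CategoryTheory CategoryTheory.Limits CochainComplex CochainComplex.HomComplex

noncomputable section

universe u

variable {k : Type u} [CommRing k] {S : Type u}

variable {𝒞 : Type (u + 1)} [Category.{u} 𝒞] [HasLimits 𝒞] [HasColimits 𝒞]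
  (F : DGS k S ⥤ 𝒞) (U : 𝒞 ⥤ DGS k S) (adj : F ⊣ U)

section
variable {M : DGS k S} {A : 𝒞} (α : M ⟶ U.obj A) {D : 𝒞} (jbar : A ⟶ D)
  (g : F.obj (DGS.coneFun α) ⟶ D)

/-- Corollary: the chain map `α ≫ U j̄ : M ⟶ U(A⟨M,α⟩)` is null-homotopic, with
null-homotopy `θ`; in particular, if `d_M = 0` then for every `m ∈ M` the cycle `α(m)` is
sent by `U j̄` to the boundary of `θ(m)`. -/
theorem alpha_comp_jbar_nullHomotopic
    (hpo : IsPushout (adj.counit.app A) (F.map (DGS.coneInr α)) jbar g) :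
    DGS.IsNullHomotopy (α ≫ U.map jbar) (theta F U adj α g) ∧
    ((∀ (x : S) (n m : ℤ), (M x).d n m = 0) →
      ∀ (x : S) (n : ℤ) (m : (M x).X n),
        ((U.map jbar) x).f n ((α x).f n m) =
          ((U.obj D) x).d (n - 1) n
            ((theta F U adj α g x).v n (n - 1) (by omega) m)) := by
  have hcomm : (α ≫ DGS.coneInr α) ≫ (adj.unit.app (DGS.coneFun α) ≫ U.map g) =
      α ≫ U.map jbar := by
    have h1 : DGS.coneInr α ≫ adj.unit.app (DGS.coneFun α) =
        adj.unit.app (U.obj A) ≫ U.map (F.map (DGS.coneInr α)) := by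
      simpa using adj.unit.naturality (DGS.coneInr α)
    have hw := hpo.w
    simp only [Category.assoc]
    rw [← Category.assoc (DGS.coneInr α), h1, Category.assoc, ← U.map_comp, ← hw,
      U.map_comp]
    slice_lhs 2 3 => rw [adj.right_triangle_components]
    simp
  have key : ∀ x : S, δ (-1) 0 (theta F U adj α g x) =
      Cochain.ofHom ((α ≫ U.map jbar) x) := by
    intro x
    rw [theta]
    erw [δ_comp_ofHom]
    rw [mappingCone.δ_inl]
    erw [← Cochain.ofHom_comp]
    exact congr_arg Cochain.ofHom (congr_fun hcomm x)
  refine ⟨key, ?_⟩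
  intro hM x n m
  have h2 := Cochain.congr_v (key x) n n (add_zero n)
  rw [δ_v (-1) 0 (neg_add_cancel 1) _ n n (add_zero n) (n - 1) (n + 1) rfl rfl] at h2
  simp only [hM, Int.negOnePow_zero, one_smul, zero_comp, add_zero,
    Cochain.ofHom_v] at h2
  have h3 := congr_arg (fun f => f.hom m) h2
  simpa using h3.symm

end
end
end

section
/- For every n ∈ ℤ and every pair of elements u ∈ U^{n+1}, v ∈ V^n such that d u = 0 and g(u) = d v, there exists an element w ∈ U^n with d w = u and g(w) = v. -/
open CategoryTheory

section Aux

variable {R : Type*} [Ring R] {S₁ S₂ : ShortComplex (ModuleCat R)} (φ : S₁ ⟶ S₂)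
variable [S₁.HasHomology] [S₂.HasHomology]

/-- The map induced by `φ.τ₂` between kernels of `g`. -/
noncomputable def auxKerMap : LinearMap.ker S₁.g.hom →ₗ[R] LinearMap.ker S₂.g.hom :=
  LinearMap.restrict φ.τ₂.hom (fun x hx => by
    simp only [LinearMap.mem_ker] at hx ⊢
    have := congrFun (congrArg (fun (f : S₁.X₂ ⟶ S₂.X₃) => (f : S₁.X₂ → S₂.X₃)) φ.comm₂₃) x
    dsimp at this
    rw [this, hx, map_zero])

lemma auxKerMap_range : LinearMap.range S₁.moduleCatToCycles ≤
    Submodule.comap (auxKerMap φ) (LinearMap.range S₂.moduleCatToCycles) := by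
  rintro _ ⟨x₁, rfl⟩
  refine ⟨φ.τ₁ x₁, Subtype.ext ?_⟩
  have := congrFun (congrArg (fun (f : S₁.X₁ ⟶ S₂.X₂) => (f : S₁.X₁ → S₂.X₂)) φ.comm₁₂) x₁
  dsimp [auxKerMap, LinearMap.restrict] at this ⊢
  first | exact this | exact this.symm

/-- The explicit left homology map data. -/
noncomputable def auxLHMD : ShortComplex.LeftHomologyMapData φ
    S₁.moduleCatLeftHomologyData S₂.moduleCatLeftHomologyData where
  φK := ModuleCat.ofHom (auxKerMap φ)
  φH := ModuleCat.ofHom (Submodule.mapQ _ _ (auxKerMap φ) (auxKerMap_range φ))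
  commi := rfl
  commf' := by
    ext x₁
    apply Subtype.ext
    have := congrFun (congrArg (fun (f : S₁.X₁ ⟶ S₂.X₂) => (f : S₁.X₁ → S₂.X₂)) φ.comm₁₂) x₁
    dsimp [auxKerMap, LinearMap.restrict] at this ⊢
    first | exact this | exact this.symm
  commπ := rfl

lemma auxφH_bijective
    (h : IsIso (ShortComplex.homologyMap φ)) :
    Function.Bijective (Submodule.mapQ _ _ (auxKerMap φ) (auxKerMap_range φ)) := by
  have heq := (auxLHMD φ).homologyMap_eq
  have : (auxLHMD φ).φH =
      S₁.moduleCatLeftHomologyData.homologyIso.inv ≫ ShortComplex.homologyMap φ ≫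
        S₂.moduleCatLeftHomologyData.homologyIso.hom := by
    rw [heq]
    simp
  have hiso : IsIso ((auxLHMD φ).φH) := by rw [this]; infer_instance
  have := (ConcreteCategory.bijective_of_isIso ((auxLHMD φ).φH))
  exact this

lemma auxA (h : IsIso (ShortComplex.homologyMap φ))
    (x₂ : S₁.X₂) (hx : S₁.g x₂ = 0) (y : S₂.X₁) (hy : S₂.f y = φ.τ₂ x₂) :
    ∃ x₁ : S₁.X₁, S₁.f x₁ = x₂ := by
  set p := LinearMap.range S₁.moduleCatToCycles
  have hinj := (auxφH_bijective φ h).1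
  set m : LinearMap.ker S₁.g.hom := ⟨x₂, hx⟩ with hm
  have h1 : Submodule.mapQ _ _ (auxKerMap φ) (auxKerMap_range φ) (Submodule.Quotient.mk m)
      = Submodule.Quotient.mk (auxKerMap φ m) := rfl
  have h2 : auxKerMap φ m = S₂.moduleCatToCycles y := by
    apply Subtype.ext
    exact hy.symm
  have h3 : (Submodule.Quotient.mk (auxKerMap φ m) :
      LinearMap.ker S₂.g.hom ⧸ LinearMap.range S₂.moduleCatToCycles) = 0 := by
    rw [h2, Submodule.Quotient.mk_eq_zero]
    exact ⟨y, rfl⟩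
  have h4 : (Submodule.Quotient.mk m : LinearMap.ker S₁.g.hom ⧸ p) = 0 := by
    apply hinj
    rw [h1, h3, map_zero]
  rw [Submodule.Quotient.mk_eq_zero] at h4
  obtain ⟨x₁, hx₁⟩ := h4
  exact ⟨x₁, congrArg Subtype.val hx₁⟩

lemma auxB (h : IsIso (ShortComplex.homologyMap φ))
    (z : S₂.X₂) (hz : S₂.g z = 0) :
    ∃ (x : S₁.X₂) (y : S₂.X₁), S₁.g x = 0 ∧ φ.τ₂ x = z + S₂.f y := by
  have hsurj := (auxφH_bijective φ h).2
  obtain ⟨q, hq⟩ := hsurj (Submodule.Quotient.mk (⟨z, hz⟩ : LinearMap.ker S₂.g.hom))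
  obtain ⟨m, rfl⟩ := Submodule.Quotient.mk_surjective _ q
  rw [Submodule.mapQ_apply, Submodule.Quotient.eq] at hq
  obtain ⟨y, hy⟩ := hq
  refine ⟨m.1, y, m.2, ?_⟩
  have := congrArg Subtype.val hy
  dsimp [auxKerMap, LinearMap.restrict] at this
  rw [show S₂.f y = φ.τ₂ m.1 - z from this]
  abel

end Aux

/-- Lemma 2 (Hinich-type): if `g : U ⟶ V` is a surjective quasi-isomorphism of cochain
complexes of `k`-modules, then for every pair `(u, v)` with `u ∈ U^{n+1}`, `v ∈ V^n`,
`d u = 0` and `g u = d v`, there exists `w ∈ U^n` with `d w = u` and `g w = v`. -/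
theorem surjective_quasiIso_lifting {k : Type*} [CommRing k]
    (U V : CochainComplex (ModuleCat k) ℤ) (g : U ⟶ V) [QuasiIso g]
    (hsurj : ∀ n : ℤ, Function.Surjective (g.f n)) :
    ∀ (n : ℤ) (u : U.X (n + 1)) (v : V.X n),
      U.d (n + 1) (n + 2) u = 0 → g.f (n + 1) u = V.d n (n + 1) v →
      ∃ w : U.X n, U.d n (n + 1) w = u ∧ g.f n w = v := by
  intro n u v hu hgu
  have rel1 : (ComplexShape.up ℤ).Rel n (n + 1) := rfl
  have rel2 : (ComplexShape.up ℤ).Rel (n + 1) (n + 2) := by simp only [ComplexShape.up_Rel]; omega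
  have rel0 : (ComplexShape.up ℤ).Rel (n - 1) n := by simp only [ComplexShape.up_Rel]; omega
  have hq1 : ShortComplex.QuasiIso
      ((HomologicalComplex.shortComplexFunctor' (ModuleCat k) (ComplexShape.up ℤ)
        n (n + 1) (n + 2)).map g) := by
    rw [← quasiIsoAt_iff' g n (n + 1) (n + 2)
      ((ComplexShape.up ℤ).prev_eq' rel1) ((ComplexShape.up ℤ).next_eq' rel2)]
    infer_instance
  have h1 := (ShortComplex.quasiIso_iff _).mp hq1
  obtain ⟨w₀, hw₀⟩ := auxA
    ((HomologicalComplex.shortComplexFunctor' (ModuleCat k) (ComplexShape.up ℤ)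
        n (n + 1) (n + 2)).map g) h1 u hu v hgu.symm
  have hW : ∃ w : U.X n, U.d n (n + 1) w = u := ⟨w₀, hw₀⟩
  clear hw₀
  obtain ⟨w₀, hw₀⟩ := hW
  have hq0 : ShortComplex.QuasiIso
      ((HomologicalComplex.shortComplexFunctor' (ModuleCat k) (ComplexShape.up ℤ)
        (n - 1) n (n + 1)).map g) := by
    rw [← quasiIsoAt_iff' g (n - 1) n (n + 1)
      ((ComplexShape.up ℤ).prev_eq' rel0) ((ComplexShape.up ℤ).next_eq' rel1)]
    infer_instance
  have h0 := (ShortComplex.quasiIso_iff _).mp hq0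
  have hcomm : ∀ x : U.X n, g.f (n + 1) (U.d n (n + 1) x) = V.d n (n + 1) (g.f n x) := by
    intro x
    exact (congrFun (congrArg (fun (f : U.X n ⟶ V.X (n + 1)) => (f : U.X n → V.X (n + 1)))
      (g.comm n (n + 1))) x).symm
  have hcomm' : ∀ x : U.X (n - 1), g.f n (U.d (n - 1) n x) = V.d (n - 1) n (g.f (n - 1) x) := by
    intro x
    exact (congrFun (congrArg (fun (f : U.X (n - 1) ⟶ V.X n) => (f : U.X (n - 1) → V.X n))
      (g.comm (n - 1) n)) x).symm
  have hz : V.d n (n + 1) (g.f n w₀ - v) = 0 := by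
    rw [map_sub, ← hcomm w₀, hw₀, hgu, sub_self]
  obtain ⟨x, y, hx, hxy⟩ := auxB
    ((HomologicalComplex.shortComplexFunctor' (ModuleCat k) (ComplexShape.up ℤ)
        (n - 1) n (n + 1)).map g) h0 (g.f n w₀ - v) hz
  have hX : ∃ (x : U.X n) (y : V.X (n - 1)), U.d n (n + 1) x = 0 ∧
      g.f n x = (g.f n w₀ - v) + V.d (n - 1) n y := ⟨x, y, hx, hxy⟩
  clear hx hxy
  obtain ⟨x, y, hx, hxy⟩ := hX
  obtain ⟨s, hs⟩ := hsurj (n - 1) y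
  refine ⟨w₀ - x + U.d (n - 1) n s, ?_, ?_⟩
  · have hdd : U.d n (n + 1) (U.d (n - 1) n s) = 0 := by
      have := congrFun (congrArg (fun (f : U.X (n - 1) ⟶ U.X (n + 1)) =>
        (f : U.X (n - 1) → U.X (n + 1))) (U.d_comp_d (n - 1) n (n + 1))) s
      dsimp at this
      rw [this]
    rw [map_add, map_sub, hw₀, hx, hdd, sub_zero, add_zero]
  · rw [map_add, map_sub, hxy, hcomm' s, hs]
    abel
end

section
/- Suppose M consists of free modules with zero differential. Then for every chain map α : M ⟶ U A, the morphism j̄ : A ⟶ A⟨M,α⟩ has the left lifting property with respect to every morphism y of 𝒞 such that, for every x ∈ S, (U y)(x) is surjective in every degree and is a quasi-isomorphism; i.e. every commutative square in 𝒞 with left edge j̄ and right edge such a y admits a diagonal filler. -/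
open CategoryTheory CategoryTheory.Limits CochainComplex CochainComplex.HomComplex

noncomputable section

universe u

variable {k : Type u} [CommRing k] {S : Type u}

namespace LiftAux

section SC
variable {S S₁ S₂ : ShortComplex (ModuleCat.{u} k)}

def cycMk (x : S.X₂) (hx : S.g x = 0) : S.cycles :=
  S.moduleCatCyclesIso.inv ⟨x, hx⟩

lemma i_cycMk (x : S.X₂) (hx : S.g x = 0) : S.iCycles (cycMk x hx) = x := by
  have := ShortComplex.moduleCatCyclesIso_inv_iCycles_apply (S := S) ⟨x, hx⟩
  exact this.trans rfl

lemma homologyπ_cycMk_eq_zero_iff (x : S.X₂) (hx : S.g x = 0) :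
    S.homologyπ (cycMk x hx) = 0 ↔ ∃ a, S.f a = x := by
  have h1 := ShortComplex.moduleCatCyclesIso_inv_π_apply (S := S) ⟨x, hx⟩
  have hinj : Function.Injective S.moduleCatHomologyIso.inv :=
    (ModuleCat.mono_iff_injective S.moduleCatHomologyIso.inv).1 inferInstance
  have key : S.homologyπ (cycMk x hx) = 0 ↔ S.moduleCatLeftHomologyData.π ⟨x, hx⟩ = 0 := by
    rw [cycMk]
    erw [h1]
    constructor
    · intro h
      exact hinj (h.trans (map_zero _).symm)
    · intro h
      erw [h]
      exact map_zero _
  rw [key]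
  erw [Submodule.Quotient.mk_eq_zero]
  constructor
  · rintro ⟨a, ha⟩
    exact ⟨a, congrArg Subtype.val ha⟩
  · rintro ⟨a, ha⟩
    exact ⟨a, Subtype.ext ha⟩

lemma homology_surjective (z : S.homology) :
    ∃ (x : S.X₂) (hx : S.g x = 0), S.homologyπ (cycMk x hx) = z := by
  obtain ⟨c, hc⟩ := Submodule.mkQ_surjective _ (S.moduleCatHomologyIso.hom z)
  refine ⟨c.1, c.2, ?_⟩
  have h1 := ShortComplex.moduleCatCyclesIso_inv_π_apply (S := S) c
  rw [show cycMk (S := S) c.1 c.2 = S.moduleCatCyclesIso.inv c from rfl]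
  erw [h1, hc]
  show (S.moduleCatHomologyIso.hom ≫ S.moduleCatHomologyIso.inv) z = z
  rw [Iso.hom_inv_id]
  rfl

lemma homologyMap_π_cycMk (ψ : S₁ ⟶ S₂) (x : S₁.X₂) (hx : S₁.g x = 0)
    (hx' : S₂.g (ψ.τ₂ x) = 0) :
    ShortComplex.homologyMap ψ (S₁.homologyπ (cycMk x hx)) =
      S₂.homologyπ (cycMk (ψ.τ₂ x) hx') := by
  have h := ShortComplex.homologyπ_naturality ψ
  have h' := congrArg (fun (f : S₁.cycles ⟶ S₂.homology) => f (cycMk x hx)) h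
  simp only [ModuleCat.hom_comp, LinearMap.comp_apply] at h'
  rw [h']
  congr 1
  apply (ModuleCat.mono_iff_injective S₂.iCycles).1 inferInstance
  have := congrArg (fun (f : S₁.cycles ⟶ S₂.X₂) => f (cycMk x hx))
    (ShortComplex.cyclesMap_i ψ)
  simp only [ModuleCat.hom_comp, LinearMap.comp_apply] at this
  rw [this, i_cycMk, i_cycMk]

end SC

section Key
open HomologicalComplex

variable {P Q : CochainComplex (ModuleCat.{u} k) ℤ}

lemma cycMk_sub {S : ShortComplex (ModuleCat.{u} k)} (x y : S.X₂)
    (hx : S.g x = 0) (hy : S.g y = 0) :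
    cycMk (x - y) (by rw [map_sub, hx, hy, sub_zero]) = cycMk x hx - cycMk y hy := by
  rw [cycMk, cycMk, cycMk]
  exact (congrArg S.moduleCatCyclesIso.inv
    (Subtype.ext (rfl : x - y = x - y))).trans (map_sub _ _ _)

lemma key (p : P ⟶ Q) (hsurj : ∀ n, Function.Surjective (p.f n))
    (hq : QuasiIso p) (n : ℤ) (c : P.X n) (hc : P.d n (n+1) c = 0)
    (s : Q.X (n-1)) (hs : Q.d (n-1) n s = p.f n c) :
    ∃ w, P.d (n-1) n w = c ∧ p.f (n-1) w = s := by
  have hprev : ∀ m : ℤ, (ComplexShape.up ℤ).prev m = m - 1 :=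
    fun m => (ComplexShape.up ℤ).prev_eq' (by simp)
  have hnext : ∀ m : ℤ, (ComplexShape.up ℤ).next m = m + 1 :=
    fun m => (ComplexShape.up ℤ).next_eq' (by simp)
  set ψ := (shortComplexFunctor' (ModuleCat.{u} k) (ComplexShape.up ℤ) (n-1) n (n+1)).map p
    with hψdef
  have hψ : ShortComplex.QuasiIso ψ :=
    (quasiIsoAt_iff' p (n-1) n (n+1) (hprev n) (hnext n)).1 (hq.1 n)
  have hbij : Function.Bijective (ShortComplex.homologyMap ψ) := by
    have : IsIso (ShortComplex.homologyMap ψ) := hψ.isIso'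
    exact ⟨(ModuleCat.mono_iff_injective _).1 inferInstance,
      (ModuleCat.epi_iff_surjective _).1 inferInstance⟩
  -- Step 1: find b with d b = c
  have hcS : (P.sc' (n-1) n (n+1)).g c = 0 := hc
  have hpcS : (Q.sc' (n-1) n (n+1)).g (ψ.τ₂ c) = 0 := by
    have := congrArg (fun (f : P.X n ⟶ Q.X (n+1)) => f c) (ψ.comm₂₃)
    dsimp at this ⊢
    erw [this]
    dsimp [ψ]
    change p.f (n+1) (P.d n (n+1) c) = 0
    rw [hc, map_zero]
  have hπ0 : (Q.sc' (n-1) n (n+1)).homologyπ (cycMk (ψ.τ₂ c) hpcS) = 0 :=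
    (homologyπ_cycMk_eq_zero_iff _ _).2 ⟨s, hs⟩
  have h1 : (P.sc' (n-1) n (n+1)).homologyπ (cycMk c hcS) = 0 := by
    apply hbij.1
    rw [homologyMap_π_cycMk ψ c hcS hpcS, hπ0, map_zero]
  obtain ⟨b, hb⟩ := (homologyπ_cycMk_eq_zero_iff (S := P.sc' (n-1) n (n+1)) c hcS).1 h1
  -- hb : (P.sc' (n-1) n (n+1)).f b = c, i.e. P.d (n-1) n b = c
  -- Step 2
  have hcomm : ∀ (i j : ℤ) (w : P.X i), Q.d i j (p.f i w) = p.f j (P.d i j w) := by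
    intro i j w
    have := congrArg (fun (f : P.X i ⟶ Q.X j) => f w) (p.comm i j)
    exact this
  set z : Q.X (n-1) := s - p.f (n-1) b with hzdef
  have hb' : P.d (n-1) n b = c := hb
  have hz : Q.d (n-1) n z = 0 := by
    rw [hzdef, map_sub, hs, hcomm (n-1) n b, hb', sub_self]
  set ψ' := (shortComplexFunctor' (ModuleCat.{u} k) (ComplexShape.up ℤ) (n-2) (n-1) n).map p
    with hψ'def
  have hψ' : ShortComplex.QuasiIso ψ' :=
    (quasiIsoAt_iff' p (n-2) (n-1) n (by rw [hprev]; ring) (by rw [hnext]; ring)).1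
      (hq.1 (n-1))
  have hbij' : Function.Bijective (ShortComplex.homologyMap ψ') := by
    have : IsIso (ShortComplex.homologyMap ψ') := hψ'.isIso'
    exact ⟨(ModuleCat.mono_iff_injective _).1 inferInstance,
      (ModuleCat.epi_iff_surjective _).1 inferInstance⟩
  have hzS : (Q.sc' (n-2) (n-1) n).g z = 0 := hz
  obtain ⟨hP, hhP⟩ := hbij'.2 ((Q.sc' (n-2) (n-1) n).homologyπ (cycMk z hzS))
  obtain ⟨a, ha, hha⟩ := homology_surjective hP
  rw [← hha] at hhP
  have haS : P.d (n-1) n a = 0 := ha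
  have hpaS : (Q.sc' (n-2) (n-1) n).g (ψ'.τ₂ a) = 0 := by
    show Q.d (n-1) n (p.f (n-1) a) = 0
    rw [hcomm (n-1) n a, haS, map_zero]
  rw [homologyMap_π_cycMk ψ' a ha hpaS] at hhP
  have hpaS' : (Q.sc' (n-2) (n-1) n).g (p.f (n-1) a) = 0 := hpaS
  have hhP' : (Q.sc' (n-2) (n-1) n).homologyπ (cycMk (p.f (n-1) a) hpaS') =
      (Q.sc' (n-2) (n-1) n).homologyπ (cycMk z hzS) := hhP
  have hgsub : (Q.sc' (n-2) (n-1) n).g (p.f (n-1) a - z) = 0 := by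
    exact (map_sub _ _ _).trans (by rw [hpaS', hzS, sub_zero])
  have hsub : cycMk (S := Q.sc' (n-2) (n-1) n) (p.f (n-1) a - z) hgsub =
      cycMk (S := Q.sc' (n-2) (n-1) n) (p.f (n-1) a) hpaS' -
        cycMk (S := Q.sc' (n-2) (n-1) n) z hzS :=
    cycMk_sub (S := Q.sc' (n-2) (n-1) n) (p.f (n-1) a) z hpaS' hzS
  have hdiff : (Q.sc' (n-2) (n-1) n).homologyπ
      (cycMk (S := Q.sc' (n-2) (n-1) n) (p.f (n-1) a - z) hgsub) = 0 := by
    rw [hsub, map_sub, hhP', sub_self]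
  obtain ⟨e, he⟩ := (homologyπ_cycMk_eq_zero_iff _ _).1 hdiff
  -- he : Q.d (n-2) (n-1) e = p.f (n-1) a - z
  obtain ⟨et, het⟩ := hsurj (n-2) e
  refine ⟨(show ↥(P.X (n-1)) from b) + (show ↥(P.X (n-1)) from a) - P.d (n-2) (n-1) et, ?_, ?_⟩
  · rw [map_sub, map_add]
    have hdd : P.d (n-1) n (P.d (n-2) (n-1) et) = 0 := by
      have h : P.d (n-2) (n-1) ≫ P.d (n-1) n = 0 := P.d_comp_d _ _ _
      calc P.d (n-1) n (P.d (n-2) (n-1) et) = (P.d (n-2) (n-1) ≫ P.d (n-1) n) et := rfl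
        _ = 0 := by rw [h]; rfl
    rw [hb', haS, hdd, add_zero, sub_zero]
  · rw [map_sub, map_add]
    have he' : Q.d (n-2) (n-1) e = p.f (n-1) a - z := he
    rw [← hcomm (n-2) (n-1) et]
    rw [het, he', hzdef]
    abel

end Key

section T
open CochainComplex.HomComplex

variable {M P' Q' : CochainComplex (ModuleCat.{u} k) ℤ}

lemma exists_t (hdM : ∀ n m, M.d n m = 0) (hfree : ∀ n, Module.Free k (M.X n))
    (p : P' ⟶ Q') (hsurj : ∀ n, Function.Surjective (p.f n)) (hq : QuasiIso p)
    (f : M ⟶ P') (σ : Cochain M Q' (-1))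
    (hσ : δ (-1) 0 σ = Cochain.ofHom (f ≫ p)) :
    ∃ t : Cochain M P' (-1), δ (-1) 0 t = Cochain.ofHom f ∧
      t.comp (Cochain.ofHom p) (add_zero _) = σ := by
  -- the cycle condition for f
  have hfd : ∀ (n : ℤ) (m : M.X n), P'.d n (n+1) (f.f n m) = 0 := by
    intro n m
    have h := congrArg (fun (g : M.X n ⟶ P'.X (n+1)) => g m) (f.comm n (n+1))
    dsimp at h
    rw [h, hdM]
    change f.f (n+1) 0 = 0
    exact map_zero _
  -- the boundary condition for σ
  have hσv : ∀ (n : ℤ) (m : M.X n),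
      Q'.d (n-1) n (σ.v n (n-1) (by omega) m) = p.f n (f.f n m) := by
    intro n m
    have h := Cochain.congr_v hσ n n (add_zero n)
    rw [δ_v (-1) 0 (neg_add_cancel 1) σ n n (add_zero n) (n-1) (n+1) (by omega) rfl] at h
    rw [hdM] at h
    simp only [zero_comp, smul_zero, add_zero, Cochain.ofHom_v] at h
    have h2 := congrArg (fun (g : M.X n ⟶ Q'.X n) => g m) h
    dsimp at h2
    rw [← h2]
  -- choice of lifts on a basis, degree by degree
  have hwit : ∀ (n : ℤ) (m : M.X n), ∃ w : P'.X (n-1),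
      P'.d (n-1) n w = f.f n m ∧ p.f (n-1) w = σ.v n (n-1) (by omega) m := by
    intro n m
    exact key p hsurj hq n (f.f n m) (hfd n m) (σ.v n (n-1) (by omega) m) (hσv n m)
  have hτ : ∀ n : ℤ, ∃ τ : M.X n ⟶ P'.X (n-1),
      (∀ m, P'.d (n-1) n (τ m) = f.f n m) ∧
      (∀ m, p.f (n-1) (τ m) = σ.v n (n-1) (by omega) m) := by
    intro n
    have := hfree n
    let B := Module.Free.chooseBasis k (M.X n)
    let w : Module.Free.ChooseBasisIndex k (M.X n) → P'.X (n-1) :=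
      fun i => (hwit n (B i)).choose
    refine ⟨ModuleCat.ofHom (B.constr k w), ?_, ?_⟩
    · intro m
      have : (ModuleCat.ofHom (B.constr k w) ≫ P'.d (n-1) n : M.X n ⟶ P'.X n) = f.f n := by
        apply ModuleCat.hom_ext
        apply B.ext
        intro i
        show P'.d (n-1) n (B.constr k w (B i)) = f.f n (B i)
        rw [B.constr_basis]
        exact (hwit n (B i)).choose_spec.1
      exact congrArg (fun (g : M.X n ⟶ P'.X n) => g m) this
    · intro m
      have : (ModuleCat.ofHom (B.constr k w) ≫ p.f (n-1) : M.X n ⟶ Q'.X (n-1)) =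
          σ.v n (n-1) (by omega) := by
        apply ModuleCat.hom_ext
        apply B.ext
        intro i
        show p.f (n-1) (B.constr k w (B i)) = σ.v n (n-1) (by omega) (B i)
        rw [B.constr_basis]
        exact (hwit n (B i)).choose_spec.2
      exact congrArg (fun (g : M.X n ⟶ Q'.X (n-1)) => g m) this
  choose τ hτ1 hτ2 using hτ
  refine ⟨Cochain.mk (fun a b hab => τ a ≫ eqToHom (congrArg P'.X (by omega : a - 1 = b))),
    ?_, ?_⟩
  · apply Cochain.ext
    intro a b hab
    obtain rfl : a = b := by omega
    rw [δ_v (-1) 0 (neg_add_cancel 1) _ a a (add_zero a) (a-1) (a+1) (by omega) rfl, hdM]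
    simp only [Cochain.mk_v, zero_comp, smul_zero, add_zero, Cochain.ofHom_v, eqToHom_refl,
      Category.comp_id]
    apply ModuleCat.hom_ext
    apply LinearMap.ext
    intro m
    exact hτ1 a m
  · apply Cochain.ext
    intro a b hab
    obtain rfl : b = a - 1 := by omega
    rw [Cochain.comp_zero_cochain_v, Cochain.mk_v, Cochain.ofHom_v]
    simp only [eqToHom_refl, Category.comp_id]
    apply ModuleCat.hom_ext
    apply LinearMap.ext
    intro m
    exact hτ2 a m


end T
end LiftAux

variable {𝒞 : Type (u + 1)} [Category.{u} 𝒞] [HasLimits 𝒞] [HasColimits 𝒞]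
  (F : DGS k S ⥤ 𝒞) (U : 𝒞 ⥤ DGS k S) (adj : F ⊣ U)

section
variable {M : DGS k S} {A : 𝒞} (α : M ⟶ U.obj A) {D : 𝒞} (jbar : A ⟶ D)
  (g : F.obj (DGS.coneFun α) ⟶ D)

/-- If `M` consists of free modules with zero differential, then
`j̄ : A ⟶ A⟨M,α⟩` has the left lifting property with respect to every morphism `y`
such that `U y` is componentwise a degreewise surjection and a quasi-isomorphism. -/
theorem jbar_hasLeftLiftingProperty (hfree : DGS.IsFree M)
    (hpo : IsPushout (adj.counit.app A) (F.map (DGS.coneInr α)) jbar g) :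
    ∀ ⦃P Q : 𝒞⦄ (y : P ⟶ Q),
      (∀ (x : S) (n : ℤ), Function.Surjective (((U.map y) x).f n)) →
      (∀ x : S, QuasiIso ((U.map y) x)) →
      HasLiftingProperty jbar y := by
  intro P Q y hfib hqis
  constructor
  intro u v sq
  -- the chain-level data
  let γ : DGS.coneFun α ⟶ U.obj Q := adj.unit.app _ ≫ U.map g ≫ U.map v
  have hγinr : DGS.coneInr α ≫ γ = U.map u ≫ U.map y := by
    calc DGS.coneInr α ≫ γ
        = (DGS.coneInr α ≫ adj.unit.app (DGS.coneFun α)) ≫ U.map g ≫ U.map v := by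
          show DGS.coneInr α ≫ adj.unit.app (DGS.coneFun α) ≫ U.map g ≫ U.map v = _
          rw [← Category.assoc]
      _ = (adj.unit.app _ ≫ U.map (F.map (DGS.coneInr α))) ≫ U.map g ≫ U.map v := by
          have h1 := adj.unit.naturality (DGS.coneInr α)
          dsimp at h1
          rw [h1]
      _ = adj.unit.app _ ≫ U.map (F.map (DGS.coneInr α) ≫ g ≫ v) := by
          simp
      _ = adj.unit.app _ ≫ U.map (adj.counit.app A ≫ u ≫ y) := by
          rw [← Category.assoc (F.map _) g v, ← hpo.w, Category.assoc, ← sq.w]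
      _ = (adj.unit.app _ ≫ U.map (adj.counit.app A)) ≫ U.map u ≫ U.map y := by
          simp
      _ = U.map u ≫ U.map y := by
          rw [adj.right_triangle_components]
          simp
  let σ : ∀ x : S, Cochain (M x) ((U.obj Q) x) (-1) :=
    fun x => (mappingCone.inl (α x)).comp (Cochain.ofHom (γ x)) (add_zero (-1))
  have hσ : ∀ x, δ (-1) 0 (σ x) =
      Cochain.ofHom ((α x ≫ (U.map u) x) ≫ (U.map y) x) := by
    intro x
    dsimp only [σ]
    erw [δ_comp_ofHom]
    rw [mappingCone.δ_inl]
    erw [← Cochain.ofHom_comp]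
    congr 1
    have h2 : mappingCone.inr (α x) ≫ γ x = (U.map u) x ≫ (U.map y) x :=
      congrFun hγinr x
    erw [Category.assoc, h2, Category.assoc]
  have ht : ∀ x : S, ∃ t : Cochain (M x) ((U.obj P) x) (-1),
      δ (-1) 0 t = Cochain.ofHom (α x ≫ (U.map u) x) ∧
      t.comp (Cochain.ofHom ((U.map y) x)) (add_zero _) = σ x := fun x =>
    LiftAux.exists_t (hfree.1 x) (hfree.2 x) ((U.map y) x) (hfib x) (hqis x)
      (α x ≫ (U.map u) x) (σ x) (hσ x)
  choose t ht1 ht2 using ht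
  let lam : DGS.coneFun α ⟶ U.obj P :=
    fun x => mappingCone.desc (α x) (t x) ((U.map u) x) (ht1 x)
  have hlaminr : DGS.coneInr α ≫ lam = U.map u := by
    funext x
    exact mappingCone.inr_desc _ _ _ _
  have hlamy : lam ≫ U.map y = γ := by
    funext x
    show lam x ≫ (U.map y) x = γ x
    apply HomologicalComplex.hom_ext
    intro n
    rw [HomologicalComplex.comp_f]
    apply mappingCone.ext_from (α x) (n+1) n rfl
    · erw [← Category.assoc]
      erw [mappingCone.inl_v_desc_f]
      have hc := Cochain.congr_v (ht2 x) (n+1) n (by omega)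
      rw [Cochain.comp_zero_cochain_v, Cochain.ofHom_v] at hc
      rw [hc]
      dsimp only [σ]
      erw [Cochain.comp_zero_cochain_v, Cochain.ofHom_v]
    · erw [← Category.assoc, mappingCone.inr_f_desc_f]
      have h2 : mappingCone.inr (α x) ≫ γ x = (U.map u) x ≫ (U.map y) x :=
        congrFun hγinr x
      have h3 := congrArg (fun (w : (U.obj A) x ⟶ (U.obj Q) x) =>
        HomologicalComplex.Hom.f w n) h2
      dsimp at h3
      exact h3.symm
  let l₂ : F.obj (DGS.coneFun α) ⟶ P := (adj.homEquiv _ _).symm lam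
  have hcond : adj.counit.app A ≫ u = F.map (DGS.coneInr α) ≫ l₂ := by
    calc adj.counit.app A ≫ u
        = F.map (U.map u) ≫ adj.counit.app P := by
          have h := adj.counit.naturality u
          dsimp at h
          rw [h]
      _ = (adj.homEquiv _ _).symm (U.map u) := (adj.homEquiv_counit _ _ _).symm
      _ = (adj.homEquiv _ _).symm (DGS.coneInr α ≫ lam) := by rw [hlaminr]
      _ = F.map (DGS.coneInr α) ≫ l₂ := adj.homEquiv_naturality_left_symm _ _
  have hl2y : l₂ ≫ y = g ≫ v := by
    calc l₂ ≫ y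
        = (adj.homEquiv _ _).symm (lam ≫ U.map y) := by
          rw [Adjunction.homEquiv_naturality_right_symm]
      _ = (adj.homEquiv _ _).symm γ := by rw [hlamy]
      _ = (adj.homEquiv _ _).symm (adj.homEquiv _ _ (g ≫ v)) := by
          rw [Adjunction.homEquiv_unit]
          rw [U.map_comp]
          rfl
      _ = g ≫ v := Equiv.symm_apply_apply _ _
  exact CommSq.HasLift.mk' ⟨hpo.desc u l₂ hcond, hpo.inl_desc u l₂ hcond, by
    apply hpo.hom_ext
    · rw [← Category.assoc, hpo.inl_desc, sq.w]
    · rw [← Category.assoc, hpo.inr_desc, hl2y]⟩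


end
end
end

section
/- Let N ∈ dg^S consist of free modules with zero differential and let M = Cone(1_{N[−1]}), the componentwise mapping cone of the identity of the shift N[−1] (a contractible complex with underlying graded module N ⊕ N[−1]). Then for every chain map α : M ⟶ U A, the morphism j̄ : A ⟶ A⟨M,α⟩ is a composite j̄ = j₁ ≫ j₂ of two elementary standard cofibrations: there exist an object A₁ of 𝒞 and morphisms j₁ : A ⟶ A₁ and j₂ : A₁ ⟶ A⟨M,α⟩ with j̄ = j₁ ≫ j₂, such that each of j₁ and j₂ is, up to composing with an isomorphism of its target, a morphism of the form j̄ : B ⟶ B⟨M',α'⟩ for some M' ∈ dg^S consisting of free modules with zero differential and some chain map α' : M' ⟶ U B. -/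
open CategoryTheory CategoryTheory.Limits CochainComplex CochainComplex.HomComplex

noncomputable section

universe u

variable {k : Type u} [CommRing k] {S : Type u}

namespace DGS

/-- The zero morphism in `DGS k S` (componentwise zero chain map). -/
def zeroHom (M N : DGS k S) : M ⟶ N := fun _ => 0

end DGS



variable {𝒞 : Type (u + 1)} [Category.{u} 𝒞] [HasLimits 𝒞] [HasColimits 𝒞]
  (F : DGS k S ⥤ 𝒞) (U : 𝒞 ⥤ DGS k S) (adj : F ⊣ U)

/-- `j : B ⟶ E` is an elementary standard cofibration: it is (the structure morphism of)
a pushout `B ⟶ B⟨M,α⟩` for some `M` consisting of free modules with zero differential. -/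
def IsElemStdCof {B E : 𝒞} (j : B ⟶ E) : Prop :=
  ∃ (M : DGS k S) (α : M ⟶ U.obj B) (g : F.obj (DGS.coneFun α) ⟶ E),
    DGS.IsFree M ∧ IsPushout (adj.counit.app B) (F.map (DGS.coneInr α)) j g

namespace StdCofAux
open CochainComplex.mappingCone


abbrev Cx (k : Type u) [CommRing k] := CochainComplex (ModuleCat.{u} k) ℤ

/-- Functoriality of the mapping cone when postcomposing the target. -/
def coneHomMap {M X Y : Cx k} (β : M ⟶ X) (f : X ⟶ Y) :
    mappingCone β ⟶ mappingCone (β ≫ f) :=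
  mappingCone.desc β (inl (β ≫ f)) (f ≫ inr (β ≫ f)) (by simp)

@[simp] lemma inr_coneHomMap {M X Y : Cx k} (β : M ⟶ X) (f : X ⟶ Y) :
    inr β ≫ coneHomMap β f = f ≫ inr (β ≫ f) := by
  simp [coneHomMap]

@[simp] lemma inl_coneHomMap {M X Y : Cx k} (β : M ⟶ X) (f : X ⟶ Y) :
    (inl β).comp (Cochain.ofHom (coneHomMap β f)) (add_zero (-1)) = inl (β ≫ f) := by
  simp [coneHomMap]

lemma cone_hom_ext {M X T : Cx k} (φ : M ⟶ X) {g₁ g₂ : mappingCone φ ⟶ T}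
    (h₁ : (inl φ).comp (Cochain.ofHom g₁) (add_zero (-1)) =
          (inl φ).comp (Cochain.ofHom g₂) (add_zero (-1)))
    (h₂ : inr φ ≫ g₁ = inr φ ≫ g₂) : g₁ = g₂ := by
  apply HomologicalComplex.hom_ext
  intro n
  rw [ext_from_iff φ (n + 1) n rfl]
  constructor
  · have := Cochain.congr_v h₁ (n + 1) n (by omega)
    simpa only [Cochain.comp_v _ _ (add_zero (-1)) (n + 1) n n (by omega) (by omega),
      Cochain.ofHom_v] using this
  · have := congr_arg (fun ψ => HomologicalComplex.Hom.f ψ n) h₂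
    simpa using this

lemma isPushout_coneHomMap {M X Y : Cx k} (β : M ⟶ X) (f : X ⟶ Y) :
    IsPushout f (inr β) (inr (β ≫ f)) (coneHomMap β f) := by
  have w : CommSq f (inr β) (inr (β ≫ f)) (coneHomMap β f) := ⟨by simp⟩
  apply IsPushout.of_isColimit' w
  apply PushoutCocone.IsColimit.mk w.w
    (fun s => mappingCone.desc (β ≫ f) ((inl β).comp (Cochain.ofHom s.inr) (add_zero (-1)))
      s.inl (by
        rw [δ_comp_zero_cochain _ _ _ (neg_add_cancel 1), δ_inl, δ_ofHom]
        simp only [Cochain.comp_zero, smul_zero, add_zero, ← Cochain.ofHom_comp,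
          Category.assoc]
        rw [← s.condition]
        simp))
  · intro s
    simp
  · intro s
    apply cone_hom_ext β
    · rw [Cochain.ofHom_comp,
        ← Cochain.comp_assoc_of_second_is_zero_cochain, inl_coneHomMap]
      simp
    · rw [← Category.assoc, inr_coneHomMap, Category.assoc, inr_desc, s.condition]
  · intro s m hm₁ hm₂
    apply cone_hom_ext (β ≫ f)
    · have : (inl (β ≫ f)).comp (Cochain.ofHom m) (add_zero (-1)) =
          (inl β).comp (Cochain.ofHom s.inr) (add_zero (-1)) := by
        rw [← hm₂, Cochain.ofHom_comp, ← Cochain.comp_assoc_of_second_is_zero_cochain,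
          inl_coneHomMap]
      rw [this]
      simp
    · rw [hm₁]
      simp


section Sigma
variable (N : CochainComplex (ModuleCat.{u} k) ℤ)

/-- The canonical degree `1` cochain `N ⟶ N⟦-1⟧` given by identities. -/
def σc : Cochain N (N⟦(-1 : ℤ)⟧) 1 :=
  Cochain.mk fun p q hpq => (N.XIsoOfEq (show p = q + (-1) by omega)).hom ≫
    (N.shiftFunctorObjXIso (-1) q (q + (-1)) rfl).inv

/-- The canonical degree `-1` cochain `N⟦-1⟧ ⟶ N` given by identities. -/
def σc' : Cochain (N⟦(-1 : ℤ)⟧) N (-1) :=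
  Cochain.mk fun p q hpq => (N.shiftFunctorObjXIso (-1) p (p + (-1)) rfl).hom ≫
    (N.XIsoOfEq (show p + (-1) = q by omega)).hom

lemma σσ' : (σc N).comp (σc' N) (by omega) = Cochain.ofHom (𝟙 N) := by
  ext p : 1
  rw [Cochain.comp_v _ _ (show (1 : ℤ) + (-1) = 0 by omega) p (p + 1) p (by omega) (by omega)]
  rw [σc, σc', Cochain.mk_v, Cochain.mk_v]
  simp [σc, σc', HomologicalComplex.XIsoOfEq, shiftFunctorObjXIso, eqToHom_trans]

lemma σ'σ : (σc' N).comp (σc N) (by omega) = Cochain.ofHom (𝟙 (N⟦(-1 : ℤ)⟧)) := by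
  ext p : 1
  rw [Cochain.comp_v _ _ (show (-1 : ℤ) + 1 = 0 by omega) p (p - 1) p (by omega) (by omega)]
  rw [σc, σc', Cochain.mk_v, Cochain.mk_v]
  simp [σc, σc', HomologicalComplex.XIsoOfEq, shiftFunctorObjXIso, eqToHom_trans]

variable {N}

lemma hdP (hdN : ∀ n m : ℤ, N.d n m = 0) : ∀ n m : ℤ, (N⟦(-1 : ℤ)⟧).d n m = 0 := by
  intro n m
  rw [CochainComplex.shiftFunctor_obj_d', hdN, smul_zero]
  rfl

lemma δσ (hdN : ∀ n m : ℤ, N.d n m = 0) : δ 1 2 (σc N) = 0 := by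
  ext p q hpq : 1
  rw [δ_v 1 2 (by omega) (σc N) p q hpq (p + 1) (p + 1) (by omega) (by omega)]
  rw [hdP hdN, hdN]
  simp only [Limits.comp_zero, Limits.zero_comp, smul_zero, add_zero, Cochain.zero_v]

lemma δσ' (hdN : ∀ n m : ℤ, N.d n m = 0) : δ (-1) 0 (σc' N) = 0 := by
  ext p : 1
  rw [δ_v (-1) 0 (by omega) (σc' N) p p (by omega) (p - 1) (p + 1) (by omega) (by omega)]
  rw [hdP hdN, hdN]
  simp only [Limits.comp_zero, Limits.zero_comp, smul_zero, add_zero, Cochain.zero_v]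

end Sigma

section Decomp
variable {N A' : CochainComplex (ModuleCat.{u} k) ℤ}

/-- The degree `-1` component of a map defined on the cone of `𝟙 (N⟦-1⟧)`. -/
def ac (α : mappingCone (𝟙 (N⟦(-1 : ℤ)⟧)) ⟶ A') : Cochain (N⟦(-1 : ℤ)⟧) A' (-1) :=
  (inl (𝟙 (N⟦(-1 : ℤ)⟧))).comp (Cochain.ofHom α) (add_zero (-1))

/-- The restriction of `α` to `N⟦-1⟧` along `inr`. -/
def alpha1 (α : mappingCone (𝟙 (N⟦(-1 : ℤ)⟧)) ⟶ A') : (N⟦(-1 : ℤ)⟧) ⟶ A' :=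
  inr (𝟙 (N⟦(-1 : ℤ)⟧)) ≫ α

lemma δ_ac (α : mappingCone (𝟙 (N⟦(-1 : ℤ)⟧)) ⟶ A') :
    δ (-1) 0 (ac α) = Cochain.ofHom (alpha1 α) := by
  rw [ac, δ_comp_zero_cochain _ _ _ (neg_add_cancel 1), δ_ofHom, δ_inl,
    Cochain.comp_zero, zero_add, ← Cochain.ofHom_comp]
  simp [alpha1]

lemma δτ (hdN : ∀ n m : ℤ, N.d n m = 0) (α : mappingCone (𝟙 (N⟦(-1 : ℤ)⟧)) ⟶ A') :
    δ 0 1 ((σc N).comp (ac α) (by omega)) =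
      (σc N).comp (Cochain.ofHom (alpha1 α)) (add_zero 1) := by
  rw [δ_comp (σc N) (ac α) (by omega) 2 0 1 (by omega) (by omega) (by omega),
    δσ hdN, δ_ac, Cochain.zero_comp, smul_zero, add_zero]

/-- The second attaching map `β : N ⟶ Cone(α₁)`. -/
def βc (hdN : ∀ n m : ℤ, N.d n m = 0) (α : mappingCone (𝟙 (N⟦(-1 : ℤ)⟧)) ⟶ A') :
    N ⟶ mappingCone (alpha1 α) :=
  mappingCone.lift (alpha1 α) (Cocycle.mk (σc N) 2 rfl (δσ hdN))
    (-(σc N).comp (ac α) (by omega))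
    (by rw [δ_neg, δτ hdN α, Cocycle.mk_coe, neg_add_cancel])

/-- The canonical map `Cone(α₁) ⟶ Cone(α)`. -/
def ψc (α : mappingCone (𝟙 (N⟦(-1 : ℤ)⟧)) ⟶ A') :
    mappingCone (alpha1 α) ⟶ mappingCone α :=
  mappingCone.desc (alpha1 α)
    ((Cochain.ofHom (inr (𝟙 (N⟦(-1 : ℤ)⟧)))).comp (inl α) (zero_add (-1))) (inr α)
    (by
      rw [δ_zero_cochain_comp _ _ _ (neg_add_cancel 1), δ_ofHom, Cochain.zero_comp,
        smul_zero, add_zero, δ_inl, ← Cochain.ofHom_comp]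
      simp [alpha1])

@[simp] lemma inr_ψc (α : mappingCone (𝟙 (N⟦(-1 : ℤ)⟧)) ⟶ A') :
    inr (alpha1 α) ≫ ψc α = inr α := by simp [ψc]

@[simp] lemma inl_ψc (α : mappingCone (𝟙 (N⟦(-1 : ℤ)⟧)) ⟶ A') :
    (inl (alpha1 α)).comp (Cochain.ofHom (ψc α)) (add_zero (-1)) =
      (Cochain.ofHom (inr (𝟙 (N⟦(-1 : ℤ)⟧)))).comp (inl α) (zero_add (-1)) := by
  simp [ψc]

end Decomp

section Decomp2
variable {N A' : CochainComplex (ModuleCat.{u} k) ℤ}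
  (hdN : ∀ n m : ℤ, N.d n m = 0) (α : mappingCone (𝟙 (N⟦(-1 : ℤ)⟧)) ⟶ A')

lemma ofHom_βc :
    Cochain.ofHom (βc hdN α) = (σc N).comp (inl (alpha1 α)) (by omega) -
      ((σc N).comp (ac α) (by omega)).comp
        (Cochain.ofHom (inr (alpha1 α))) (add_zero 0) := by
  rw [βc, ofHom_lift]
  unfold liftCochain
  rw [Cocycle.mk_coe, Cochain.neg_comp, ← sub_eq_add_neg]

lemma hw : δ (-2) (-1) ((inl (𝟙 (N⟦(-1 : ℤ)⟧))).comp (inl α) (show (-1 : ℤ) + (-1) = -2 by omega)) =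
    (inl (𝟙 (N⟦(-1 : ℤ)⟧))).comp (Cochain.ofHom (α ≫ inr α)) (add_zero (-1)) -
      (Cochain.ofHom (inr (𝟙 (N⟦(-1 : ℤ)⟧)))).comp (inl α) (zero_add (-1)) := by
  rw [δ_comp (inl (𝟙 (N⟦(-1 : ℤ)⟧))) (inl α) (by omega) 0 0 (-1) (by omega) (by omega)
    (by omega), δ_inl, δ_inl, Category.id_comp]
  have h1 : ((-1 : ℤ)).negOnePow = -1 := by decide
  rw [h1, Units.neg_smul, one_smul, ← sub_eq_add_neg]

lemma hc₂ : δ (-1) 0 (-(σc N).comp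
      ((inl (𝟙 (N⟦(-1 : ℤ)⟧))).comp (inl α) (show (-1 : ℤ) + (-1) = -2 by omega)) (show (1 : ℤ) + (-2) = -1 by omega)) =
    Cochain.ofHom (βc hdN α ≫ ψc α) := by
  have hR : Cochain.ofHom (βc hdN α ≫ ψc α) =
      (σc N).comp ((Cochain.ofHom (inr (𝟙 (N⟦(-1 : ℤ)⟧)))).comp (inl α) (zero_add (-1)))
        (show (1 : ℤ) + (-1) = 0 by omega) -
      (σc N).comp ((inl (𝟙 (N⟦(-1 : ℤ)⟧))).comp (Cochain.ofHom (α ≫ inr α)) (add_zero (-1)))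
        (show (1 : ℤ) + (-1) = 0 by omega) := by
    rw [Cochain.ofHom_comp, ofHom_βc, Cochain.sub_comp]
    congr 1
    · rw [Cochain.comp_assoc_of_third_is_zero_cochain, inl_ψc]
    · rw [Cochain.comp_assoc_of_third_is_zero_cochain,
        Cochain.comp_assoc_of_third_is_zero_cochain, ← Cochain.ofHom_comp, inr_ψc, ac,
        Cochain.comp_assoc_of_third_is_zero_cochain, ← Cochain.ofHom_comp]
  rw [hR, δ_neg, δ_comp (σc N) _ (show (1 : ℤ) + (-2) = -1 by omega) 2 (-1) 0 (by omega)
    (by omega) (by omega), δσ hdN, Cochain.zero_comp, smul_zero, add_zero, hw,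
    Cochain.comp_sub, neg_sub]

/-- The comparison map `Cone(β) ⟶ Cone(α)`. -/
def ec : mappingCone (βc hdN α) ⟶ mappingCone α :=
  mappingCone.desc (βc hdN α)
    (-(σc N).comp ((inl (𝟙 (N⟦(-1 : ℤ)⟧))).comp (inl α) (show (-1 : ℤ) + (-1) = -2 by omega)) (show (1 : ℤ) + (-2) = -1 by omega))
    (ψc α) (hc₂ hdN α)

@[simp] lemma inr_ec : inr (βc hdN α) ≫ ec hdN α = ψc α := by simp [ec]

@[simp] lemma inl_ec : (inl (βc hdN α)).comp (Cochain.ofHom (ec hdN α)) (add_zero (-1)) =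
    -(σc N).comp ((inl (𝟙 (N⟦(-1 : ℤ)⟧))).comp (inl α) (show (-1 : ℤ) + (-1) = -2 by omega)) (show (1 : ℤ) + (-2) = -1 by omega) := by
  simp [ec]

end Decomp2

section Decomp3
variable {N A' : CochainComplex (ModuleCat.{u} k) ℤ}
  (hdN : ∀ n m : ℤ, N.d n m = 0) (α : mappingCone (𝟙 (N⟦(-1 : ℤ)⟧)) ⟶ A')

/-- The `inl`-part of the inverse comparison map. -/
def c3 : Cochain (mappingCone (𝟙 (N⟦(-1 : ℤ)⟧))) (mappingCone (βc hdN α)) (-1) :=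
  -(fst (𝟙 (N⟦(-1 : ℤ)⟧))).1.comp ((σc' N).comp (inl (βc hdN α))
      (show (-1 : ℤ) + (-1) = -2 by omega)) (show (1 : ℤ) + (-2) = -1 by omega) +
  (snd (𝟙 (N⟦(-1 : ℤ)⟧))).comp ((inl (alpha1 α)).comp
      (Cochain.ofHom (inr (βc hdN α))) (add_zero (-1))) (zero_add (-1))

lemma σ'_ofHom_βc : (σc' N).comp (Cochain.ofHom (βc hdN α)) (add_zero (-1)) =
    inl (alpha1 α) - (ac α).comp (Cochain.ofHom (inr (alpha1 α))) (add_zero (-1)) := by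
  rw [ofHom_βc, Cochain.comp_sub,
    ← Cochain.comp_assoc (σc' N) (σc N) (inl (alpha1 α)) (show (-1 : ℤ) + 1 = 0 by omega)
      (show (1 : ℤ) + (-1) = 0 by omega) (show (-1 : ℤ) + 1 + (-1) = -1 by omega),
    σ'σ, Cochain.id_comp, Cochain.comp_assoc_of_third_is_zero_cochain,
    ← Cochain.comp_assoc (σc' N) (σc N)
      ((ac α).comp (Cochain.ofHom (inr (alpha1 α))) (add_zero (-1)))
      (show (-1 : ℤ) + 1 = 0 by omega) (show (1 : ℤ) + (-1) = 0 by omega)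
      (show (-1 : ℤ) + 1 + (-1) = -1 by omega),
    σ'σ, Cochain.id_comp]

lemma ofHom_α_decomp : Cochain.ofHom α =
    (fst (𝟙 (N⟦(-1 : ℤ)⟧))).1.comp (ac α) (add_neg_cancel 1) +
      (snd (𝟙 (N⟦(-1 : ℤ)⟧))).comp (Cochain.ofHom (alpha1 α)) (zero_add 0) := by
  conv_lhs => rw [← Cochain.id_comp (Cochain.ofHom α), ← mappingCone.id (𝟙 (N⟦(-1 : ℤ)⟧))]
  rw [Cochain.add_comp, Cochain.comp_assoc_of_third_is_zero_cochain,
    Cochain.comp_assoc_of_third_is_zero_cochain, ← Cochain.ofHom_comp]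
  rfl

lemma hc₃ : δ (-1) 0 (c3 hdN α) =
    Cochain.ofHom (α ≫ inr (alpha1 α) ≫ inr (βc hdN α)) := by
  have h1 : δ (-2) (-1) ((σc' N).comp (inl (βc hdN α)) (show (-1 : ℤ)+(-1) = -2 by omega)) =
      (σc' N).comp (Cochain.ofHom (βc hdN α ≫ inr (βc hdN α))) (add_zero (-1)) := by
    rw [δ_comp (σc' N) (inl (βc hdN α)) (by omega) 0 0 (-1) (by omega) (by omega) (by omega),
      δ_inl, δσ' hdN, Cochain.zero_comp, smul_zero, add_zero]
  have h1' : (σc' N).comp (Cochain.ofHom (βc hdN α ≫ inr (βc hdN α))) (add_zero (-1)) =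
      (inl (alpha1 α)).comp (Cochain.ofHom (inr (βc hdN α))) (add_zero (-1)) -
      (ac α).comp (Cochain.ofHom (inr (alpha1 α) ≫ inr (βc hdN α))) (add_zero (-1)) := by
    rw [Cochain.ofHom_comp,
      ← Cochain.comp_assoc_of_second_is_zero_cochain, σ'_ofHom_βc, Cochain.sub_comp,
      Cochain.comp_assoc_of_second_is_zero_cochain, ← Cochain.ofHom_comp]
  have h2 : δ (-1) 0 ((fst (𝟙 (N⟦(-1 : ℤ)⟧))).1.comp ((σc' N).comp (inl (βc hdN α))
        (show (-1 : ℤ) + (-1) = -2 by omega)) (show (1 : ℤ) + (-2) = -1 by omega)) =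
      (fst (𝟙 (N⟦(-1 : ℤ)⟧))).1.comp ((inl (alpha1 α)).comp
          (Cochain.ofHom (inr (βc hdN α))) (add_zero (-1))) (add_neg_cancel 1) -
      (fst (𝟙 (N⟦(-1 : ℤ)⟧))).1.comp ((ac α).comp
          (Cochain.ofHom (inr (alpha1 α) ≫ inr (βc hdN α))) (add_zero (-1)))
        (add_neg_cancel 1) := by
    rw [δ_comp (fst (𝟙 (N⟦(-1 : ℤ)⟧))).1 _ (show (1 : ℤ) + (-2) = -1 by omega) 2 (-1) 0
      (by omega) (by omega) (by omega), Cocycle.δ_eq_zero, Cochain.zero_comp, smul_zero,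
      add_zero, h1, h1', Cochain.comp_sub]
  have h3 : δ (-1) 0 ((snd (𝟙 (N⟦(-1 : ℤ)⟧))).comp ((inl (alpha1 α)).comp
        (Cochain.ofHom (inr (βc hdN α))) (add_zero (-1))) (zero_add (-1))) =
      (snd (𝟙 (N⟦(-1 : ℤ)⟧))).comp (Cochain.ofHom (alpha1 α ≫ inr (alpha1 α) ≫
        inr (βc hdN α))) (zero_add 0) +
      (fst (𝟙 (N⟦(-1 : ℤ)⟧))).1.comp ((inl (alpha1 α)).comp
        (Cochain.ofHom (inr (βc hdN α))) (add_zero (-1))) (add_neg_cancel 1) := by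
    have hδZ : δ (-1) 0 ((inl (alpha1 α)).comp (Cochain.ofHom (inr (βc hdN α)))
        (add_zero (-1))) = Cochain.ofHom (alpha1 α ≫ inr (alpha1 α) ≫ inr (βc hdN α)) := by
      rw [δ_comp_zero_cochain _ _ _ (neg_add_cancel 1), δ_ofHom, Cochain.comp_zero,
        zero_add, δ_inl, ← Cochain.ofHom_comp, Category.assoc]
    rw [δ_zero_cochain_comp _ _ _ (neg_add_cancel 1), hδZ, δ_snd]
    have h1 : ((-1 : ℤ)).negOnePow = -1 := by decide
    rw [h1, Cochain.neg_comp, Units.neg_smul, one_smul, neg_neg, Cochain.comp_id]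
  rw [c3, δ_add, δ_neg, h2, h3, Cochain.ofHom_comp α, ofHom_α_decomp, Cochain.add_comp,
    Cochain.comp_assoc_of_third_is_zero_cochain,
    Cochain.comp_assoc_of_third_is_zero_cochain, ← Cochain.ofHom_comp]
  abel

/-- The inverse comparison map `Cone(α) ⟶ Cone(β)`. -/
def ec' : mappingCone α ⟶ mappingCone (βc hdN α) :=
  mappingCone.desc α (c3 hdN α) (inr (alpha1 α) ≫ inr (βc hdN α)) (hc₃ hdN α)

@[simp] lemma inr_ec' : inr α ≫ ec' hdN α = inr (alpha1 α) ≫ inr (βc hdN α) := by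
  simp [ec']

@[simp] lemma inl_ec' :
    (inl α).comp (Cochain.ofHom (ec' hdN α)) (add_zero (-1)) = c3 hdN α := by
  simp [ec']

lemma ψc_ec' : ψc α ≫ ec' hdN α = inr (βc hdN α) := by
  apply cone_hom_ext (alpha1 α)
  · rw [Cochain.ofHom_comp, ← Cochain.comp_assoc_of_second_is_zero_cochain, inl_ψc,
      Cochain.comp_assoc_of_first_is_zero_cochain, inl_ec', c3, Cochain.comp_add,
      Cochain.comp_neg, inr_fst_assoc, inr_snd_assoc, neg_zero, zero_add]
  · rw [← Category.assoc, inr_ψc, inr_ec']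

lemma ec_ec' : ec hdN α ≫ ec' hdN α = 𝟙 (mappingCone (βc hdN α)) := by
  apply cone_hom_ext (βc hdN α)
  · rw [Cochain.ofHom_comp, ← Cochain.comp_assoc_of_second_is_zero_cochain, inl_ec,
      Cochain.neg_comp, Cochain.comp_assoc_of_third_is_zero_cochain,
      Cochain.comp_assoc_of_third_is_zero_cochain, inl_ec', c3, Cochain.comp_add,
      Cochain.comp_neg, inl_fst_assoc, inl_snd_assoc, add_zero, Cochain.comp_neg, neg_neg,
      ← Cochain.comp_assoc (σc N) (σc' N) (inl (βc hdN α)) (show (1 : ℤ) + (-1) = 0 by omega)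
        (show (-1 : ℤ) + (-1) = -2 by omega) (show (1 : ℤ) + (-1) + (-1) = -1 by omega),
      σσ', Cochain.id_comp, Cochain.comp_id]
  · rw [← Category.assoc, inr_ec, ψc_ec', Category.comp_id]

lemma ec'_ec : ec' hdN α ≫ ec hdN α = 𝟙 (mappingCone α) := by
  apply cone_hom_ext α
  · rw [Cochain.ofHom_comp, ← Cochain.comp_assoc_of_second_is_zero_cochain, inl_ec',
      c3, Cochain.add_comp, Cochain.neg_comp,
      Cochain.comp_assoc_of_third_is_zero_cochain (fst (𝟙 (N⟦(-1 : ℤ)⟧))).1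
        ((σc' N).comp (inl (βc hdN α)) (show (-1 : ℤ) + (-1) = -2 by omega))
        (Cochain.ofHom (ec hdN α)),
      Cochain.comp_assoc_of_third_is_zero_cochain (σc' N) (inl (βc hdN α))
        (Cochain.ofHom (ec hdN α)),
      inl_ec, Cochain.comp_neg, Cochain.comp_neg, neg_neg,
      ← Cochain.comp_assoc (σc' N) (σc N)
        ((inl (𝟙 (N⟦(-1 : ℤ)⟧))).comp (inl α) (show (-1 : ℤ) + (-1) = -2 by omega))
        (show (-1 : ℤ) + 1 = 0 by omega) (show (1 : ℤ) + (-2) = -1 by omega)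
        (show (-1 : ℤ) + 1 + (-2) = -2 by omega),
      σ'σ, Cochain.id_comp,
      Cochain.comp_assoc_of_third_is_zero_cochain (snd (𝟙 (N⟦(-1 : ℤ)⟧)))
        ((inl (alpha1 α)).comp (Cochain.ofHom (inr (βc hdN α))) (add_zero (-1)))
        (Cochain.ofHom (ec hdN α)),
      Cochain.comp_assoc_of_second_is_zero_cochain (inl (alpha1 α))
        (Cochain.ofHom (inr (βc hdN α))) (Cochain.ofHom (ec hdN α)),
      ← Cochain.ofHom_comp, inr_ec, inl_ψc,
      ← Cochain.comp_assoc (fst (𝟙 (N⟦(-1 : ℤ)⟧))).1 (inl (𝟙 (N⟦(-1 : ℤ)⟧))) (inl α)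
        (show (1 : ℤ) + (-1) = 0 by omega) (show (-1 : ℤ) + (-1) = -2 by omega)
        (show (1 : ℤ) + (-1) + (-1) = -1 by omega),
      ← Cochain.comp_assoc (snd (𝟙 (N⟦(-1 : ℤ)⟧))) (Cochain.ofHom (inr (𝟙 (N⟦(-1 : ℤ)⟧))))
        (inl α) (show (0 : ℤ) + 0 = 0 by omega) (show (0 : ℤ) + (-1) = -1 by omega)
        (show (0 : ℤ) + 0 + (-1) = -1 by omega),
      ← Cochain.add_comp, mappingCone.id, Cochain.id_comp, Cochain.comp_id]
  · rw [← Category.assoc, inr_ec', Category.assoc, inr_ec, inr_ψc, Category.comp_id]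

lemma isIso_ec : IsIso (ec hdN α) :=
  ⟨ec' hdN α, ec_ec' hdN α, ec'_ec hdN α⟩

lemma inr_inr_ec : inr (alpha1 α) ≫ inr (βc hdN α) ≫ ec hdN α = inr α := by
  rw [inr_ec, inr_ψc]

end Decomp3


lemma isPushout_pi {W X Y Z : DGS k S} {f : W ⟶ X} {g : W ⟶ Y} {h : X ⟶ Z} {i : Y ⟶ Z}
    (H : ∀ x, IsPushout (f x) (g x) (h x) (i x)) : IsPushout f g h i := by
  have w : CommSq f g h i := ⟨funext fun x => (H x).w⟩
  apply IsPushout.of_isColimit' w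
  apply PushoutCocone.IsColimit.mk w.w
    (fun s => fun x => (H x).desc (s.inl x) (s.inr x) (congrFun s.condition x))
  · intro s
    funext x
    exact (H x).inl_desc _ _ _
  · intro s
    funext x
    exact (H x).inr_desc _ _ _
  · intro s m hm₁ hm₂
    funext x
    apply (H x).hom_ext
    · rw [(H x).inl_desc]
      exact congrFun hm₁ x
    · rw [(H x).inr_desc]
      exact congrFun hm₂ x

lemma isIso_pi {X Y : DGS k S} (f : X ⟶ Y) (h : ∀ x, IsIso (f x)) : IsIso f :=
  ⟨⟨fun x => letI := h x; CategoryTheory.inv (f x),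
    funext fun x => by letI := h x; simp,
    funext fun x => by letI := h x; simp⟩⟩

lemma isFree_shift {N : DGS k S} (hN : DGS.IsFree N) : DGS.IsFree (DGS.shift N (-1)) := by
  constructor
  · intro x n m
    exact hdP (hN.1 x) n m
  · intro x n
    exact hN.2 x (n + (-1))

end StdCofAux

section
variable {A : 𝒞}

/-- If `N` consists of free modules with zero differential and `M = Cone(1_{N[-1]})`,
then for every `α : M ⟶ U A` the morphism `j̄ : A ⟶ A⟨M,α⟩` is a composition of two
elementary standard cofibrations. -/
theorem jbar_comp_of_two_elementary (N : DGS k S) (hN : DGS.IsFree N)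
    (α : DGS.coneId (DGS.shift N (-1)) ⟶ U.obj A) {D : 𝒞} (jbar : A ⟶ D)
    (g : F.obj (DGS.coneFun α) ⟶ D)
    (hpo : IsPushout (adj.counit.app A) (F.map (DGS.coneInr α)) jbar g) :
    ∃ (A₁ : 𝒞) (j₁ : A ⟶ A₁) (j₂ : A₁ ⟶ D),
      j₁ ≫ j₂ = jbar ∧ IsElemStdCof F U adj j₁ ∧ IsElemStdCof F U adj j₂ := by
  have hd : ∀ x, ∀ n m : ℤ, (N x).d n m = 0 := hN.1
  -- the first attaching map α₁ : N⟦-1⟧ ⟶ U A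
  let α₁ : DGS.shift N (-1) ⟶ U.obj A := fun x => StdCofAux.alpha1 (α x)
  -- the first pushout
  let A₁ : 𝒞 := pushout (adj.counit.app A) (F.map (DGS.coneInr α₁))
  let j₁ : A ⟶ A₁ := pushout.inl _ _
  let g₁ : F.obj (DGS.coneFun α₁) ⟶ A₁ := pushout.inr _ _
  have sq1 : IsPushout (adj.counit.app A) (F.map (DGS.coneInr α₁)) j₁ g₁ :=
    IsPushout.of_hasPushout _ _
  -- the chain-level comparison data
  let βD : N ⟶ DGS.coneFun α₁ := fun x => StdCofAux.βc (hd x) (α x)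
  let eD : DGS.coneFun βD ⟶ DGS.coneFun α := fun x => StdCofAux.ec (hd x) (α x)
  haveI hIso : IsIso eD := StdCofAux.isIso_pi eD (fun x => StdCofAux.isIso_ec (hd x) (α x))
  have hcomp : DGS.coneInr α₁ ≫ (DGS.coneInr βD ≫ eD) = DGS.coneInr α :=
    funext fun x => StdCofAux.inr_inr_ec (hd x) (α x)
  -- the second attaching map α₂ : N ⟶ U A₁
  let gh : DGS.coneFun α₁ ⟶ U.obj A₁ := adj.unit.app _ ≫ U.map g₁
  let α₂ : N ⟶ U.obj A₁ := βD ≫ gh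
  let φD : DGS.coneFun βD ⟶ DGS.coneFun α₂ := fun x => StdCofAux.coneHomMap (βD x) (gh x)
  have sq2 : IsPushout gh (DGS.coneInr βD) (DGS.coneInr α₂) φD :=
    StdCofAux.isPushout_pi (fun x => StdCofAux.isPushout_coneHomMap (βD x) (gh x))
  haveI : PreservesColimitsOfSize.{0, 0} F := adj.leftAdjoint_preservesColimits
  have sq2' : IsPushout (F.map gh) (F.map (DGS.coneInr βD)) (F.map (DGS.coneInr α₂))
      (F.map φD) := sq2.map F
  have htri : F.map gh ≫ adj.counit.app A₁ = g₁ := by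
    show F.map (adj.unit.app _ ≫ U.map g₁) ≫ adj.counit.app A₁ = g₁
    rw [F.map_comp, Category.assoc, adj.counit_naturality (f := g₁), ← Category.assoc]
    erw [adj.left_triangle_components]
    simp
  have hw0 : adj.counit.app A ≫ jbar =
      F.map (DGS.coneInr α₁) ≫ (F.map (DGS.coneInr βD ≫ eD) ≫ g) := by
    rw [← Category.assoc, ← F.map_comp, hcomp, hpo.w]
  let j₂ : A₁ ⟶ D := sq1.desc jbar (F.map (DGS.coneInr βD ≫ eD) ≫ g) hw0
  have hj12 : j₁ ≫ j₂ = jbar := sq1.inl_desc _ _ _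
  have hgj : g₁ ≫ j₂ = F.map (DGS.coneInr βD ≫ eD) ≫ g := sq1.inr_desc _ _ _
  have sqB : IsPushout g₁ (F.map (DGS.coneInr βD ≫ eD)) j₂ g := by
    apply IsPushout.of_top ?_ hgj sq1
    rw [← F.map_comp, hcomp, hj12]
    exact hpo
  haveI : IsIso (F.map eD) := inferInstance
  have sqC : IsPushout g₁ (F.map (DGS.coneInr βD)) j₂ (F.map eD ≫ g) := by
    apply sqB.of_iso (Iso.refl _) (Iso.refl _) (asIso (F.map eD)).symm (Iso.refl _)
    · simp
    · rw [F.map_comp]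
      simp
    · simp
    · simp
  have hwg : F.map gh ≫ (adj.counit.app A₁ ≫ j₂) =
      F.map (DGS.coneInr βD) ≫ (F.map eD ≫ g) := by
    rw [← Category.assoc, htri]
    exact sqC.w
  let g₂ : F.obj (DGS.coneFun α₂) ⟶ D :=
    sq2'.desc (adj.counit.app A₁ ≫ j₂) (F.map eD ≫ g) hwg
  have sq3 : IsPushout (adj.counit.app A₁) (F.map (DGS.coneInr α₂)) j₂ g₂ := by
    apply IsPushout.of_left ?_ (sq2'.inl_desc _ _ _).symm sq2'
    rw [htri, sq2'.inr_desc]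
    exact sqC
  exact ⟨A₁, j₁, j₂, hj12,
    ⟨DGS.shift N (-1), α₁, g₁, StdCofAux.isFree_shift hN, sq1⟩,
    ⟨N, α₂, g₂, hN, sq3⟩⟩


end
end
end

section
/- Let r : A ⟶ Y be a morphism of 𝒞. Let N ∈ dg^S be the subcomplex of cycles of the componentwise mapping cone Cone((U r)[−1]) of the shifted map (U r)[−1] : (U A)[−1] ⟶ (U Y)[−1], equipped with the zero differential; concretely, in each component N consists of the pairs (u, yσ^{−1}) ∈ (U A) ⊕ (U Y)[−1] with u d = 0 and u·(U r) − y·d = 0. Let pr₁ : N ⟶ U A be the chain map projecting to the first summand, and let D = A⟨N, pr₁⟩. Then: (1) the pair (r, t), where t is the degree −1 family of maps N → U Y given by projection pr₂ to the second summand (U Y)[−1] followed by σ : (U Y)[−1] → U Y, is an element of h_{A,pr₁}(Y); (2) the morphism q : D ⟶ Y corresponding to (r, t) under the representability bijection satisfies j̄ ≫ q = r; and (3) the chain map Cone((U r)[−1]) ⟶ Cone((U q)[−1]) given by U j̄ on the first summand and the identity of (U Y)[−1] on the second summand sends every cycle of Cone((U r)[−1]) to a boundary of Cone((U q)[−1]).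 -/
open CategoryTheory CategoryTheory.Limits CochainComplex CochainComplex.HomComplex

noncomputable section

universe u

variable {k : Type u} [CommRing k] {S : Type u}

variable {𝒞 : Type (u + 1)} [Category.{u} 𝒞] [HasLimits 𝒞] [HasColimits 𝒞]
  (F : DGS k S ⥤ 𝒞) (U : 𝒞 ⥤ DGS k S) (adj : F ⊣ U)

section
variable {A Y : 𝒞} (r : A ⟶ Y)

/-- The submodule of "cycles of `Cone((U r)[-1])`" in component `x`, degree `n`:
pairs `(u, y)` with `u ∈ (U A)(x)^n`, `y ∈ (U Y)(x)^{n-1}`, `d u = 0` and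
`(U r)(u) = d y`. -/
def cyclePairs (x : S) (n : ℤ) :
    Submodule k (((U.obj A) x).X n × ((U.obj Y) x).X (n - 1)) where
  carrier := {p | ((U.obj A) x).d n (n + 1) p.1 = 0 ∧
    ((U.map r) x).f n p.1 = ((U.obj Y) x).d (n - 1) n p.2}
  add_mem' := by
    rintro p q ⟨hp1, hp2⟩ ⟨hq1, hq2⟩
    exact ⟨by simp [map_add, hp1, hq1], by simp [map_add, hp2, hq2]⟩
  zero_mem' := by simp
  smul_mem' := by
    rintro c p ⟨hp1, hp2⟩
    exact ⟨by simp [map_smul, hp1], by simp [map_smul, hp2]⟩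


section
variable {A Y : 𝒞} (r : A ⟶ Y)

/-- The complex of cycles of `Cone((U r)[-1])`, with zero differential. -/
def cyclesCone : DGS k S := fun x =>
  { X := fun n => ModuleCat.of k (cyclePairs U r x n)
    d := fun _ _ => 0
    shape := fun _ _ _ => rfl
    d_comp_d' := by intros; simp }

/-- The chain map `pr₁ : N ⟶ U A`, projection to the first component. -/
def prOne : cyclesCone U r ⟶ U.obj A := fun x =>
  { f := fun n => ModuleCat.ofHom ((LinearMap.fst k _ _).comp (cyclePairs U r x n).subtype)
    comm' := by
      rintro n m (rfl : n + 1 = m)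
      ext ⟨p, hp⟩
      dsimp [cyclesCone]
      exact hp.1 }

/-- The degree `-1` family of maps `t : N → U Y`, projection to the second component. -/
def prTwoT (x : S) : Cochain ((cyclesCone U r) x) ((U.obj Y) x) (-1) :=
  Cochain.mk (fun p q hpq =>
    ModuleCat.ofHom ((LinearMap.snd k _ _).comp (cyclePairs U r x p).subtype) ≫
      (((U.obj Y) x).XIsoOfEq (show p - 1 = q by omega)).hom)

end

section
variable {A Y : 𝒞} (r : A ⟶ Y) {D : 𝒞} (jbar : A ⟶ D)


lemma part1_aux {A Y : 𝒞} (r : A ⟶ Y) :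
    DGS.IsNullHomotopy (prOne U r ≫ U.map r) (prTwoT U r) := by
  intro x
  apply Cochain.ext
  intro p q hpq
  obtain rfl : p = q := by omega
  rw [δ_v (-1) 0 (by omega) _ p p (add_zero p) (p-1) (p+1) (by omega) rfl]
  have hd : ((cyclesCone U r) x).d p (p+1) = 0 := rfl
  rw [hd, zero_comp, smul_zero, add_zero]
  apply ModuleCat.hom_ext
  apply LinearMap.ext
  rintro ⟨⟨u, y⟩, hu, hy⟩
  exact hy.symm

/-- Proposition: for `r : A ⟶ Y`, `N` the (zero-differential) complex of cycles of
`Cone((U r)[-1])` and `D = A⟨N, pr₁⟩`: (1) the pair `(r, t)`, `t = pr₂`, is an element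
of `h_{A,pr₁}(Y)`; (2) the corresponding morphism `q : D ⟶ Y` satisfies `j̄ ≫ q = r`;
(3) the chain map `Cone((U r)[-1]) ⟶ Cone((U q)[-1])` given by `U j̄` on the first
summand and the identity on the second sends every cycle to a boundary. -/
theorem cyclesCone_pushout_properties
    (g : F.obj (DGS.coneFun (prOne U r)) ⟶ D)
    (hpo : IsPushout (adj.counit.app A) (F.map (DGS.coneInr (prOne U r))) jbar g) :
    DGS.IsNullHomotopy (prOne U r ≫ U.map r) (prTwoT U r) ∧
    ∃ q : D ⟶ Y, jbar ≫ q = r ∧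
      (∀ x : S, (theta F U adj (prOne U r) g x).comp
          (Cochain.ofHom ((U.map q) x)) (add_zero (-1)) = prTwoT U r x) ∧
      (∀ (x : S) (n : ℤ) (u : ((U.obj A) x).X n) (y : ((U.obj Y) x).X (n - 1)),
        ((U.obj A) x).d n (n + 1) u = 0 →
        ((U.map r) x).f n u = ((U.obj Y) x).d (n - 1) n y →
        ∃ (a : ((U.obj D) x).X (n - 1)) (b : ((U.obj Y) x).X (n - 2)),
          ((U.obj D) x).d (n - 1) n a = ((U.map jbar) x).f n u ∧
          ((U.map q) x).f (n - 1) a - ((U.obj Y) x).d (n - 2) (n - 1) b = y) := by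
  have part1 := part1_aux U r
  refine ⟨part1, ?_⟩
  -- the chain map `φ : Cone(pr₁) ⟶ U Y`
  set φ : DGS.coneFun (prOne U r) ⟶ U.obj Y := fun x =>
    mappingCone.desc ((prOne U r) x) (prTwoT U r x) ((U.map r) x) (part1 x) with hφ
  have hφinr : DGS.coneInr (prOne U r) ≫ φ = U.map r := by
    funext x
    exact mappingCone.inr_desc _ _ _ _
  have w : adj.counit.app A ≫ r =
      F.map (DGS.coneInr (prOne U r)) ≫ F.map φ ≫ adj.counit.app Y := by
    rw [← Category.assoc, ← F.map_comp, hφinr]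
    exact (adj.counit.naturality r).symm
  set q' := hpo.desc r (F.map φ ≫ adj.counit.app Y) w with hq'
  set ψ : DGS.coneFun (prOne U r) ⟶ U.obj D :=
    adj.unit.app (DGS.coneFun (prOne U r)) ≫ U.map g with hψ
  have hψq : ψ ≫ U.map q' = φ := by
    rw [hψ, hq', Category.assoc, ← U.map_comp, hpo.inr_desc, U.map_comp, ← Category.assoc,
      adj.unit_naturality φ, Category.assoc, adj.right_triangle_components, Category.comp_id]
  have hbar : DGS.coneInr (prOne U r) ≫ ψ = U.map jbar := by
    rw [hψ, ← Category.assoc, ← adj.unit_naturality (DGS.coneInr (prOne U r)),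
      Category.assoc, ← U.map_comp, ← hpo.w, U.map_comp, ← Category.assoc,
      adj.right_triangle_components, Category.id_comp]
  -- componentwise versions
  have hψq_f : ∀ (x : S) (m : ℤ), (ψ x).f m ≫ ((U.map q') x).f m = (φ x).f m := by
    intro x m
    have hx : ψ x ≫ (U.map q') x = φ x := congrFun hψq x
    rw [← hx]; rfl
  have hbar_f : ∀ (x : S) (m : ℤ),
      (mappingCone.inr ((prOne U r) x)).f m ≫ (ψ x).f m = ((U.map jbar) x).f m := by
    intro x m
    have hx : (DGS.coneInr (prOne U r)) x ≫ ψ x = (U.map jbar) x := congrFun hbar x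
    rw [← hx]; rfl
  have thetaq : ∀ x : S, (theta F U adj (prOne U r) g x).comp
      (Cochain.ofHom ((U.map q') x)) (add_zero (-1)) = prTwoT U r x := by
    intro x
    apply Cochain.ext
    intro p q hpq
    rw [Cochain.comp_zero_cochain_v, Cochain.ofHom_v]
    dsimp only [theta]
    erw [Cochain.comp_zero_cochain_v, Cochain.ofHom_v, Category.assoc]
    have : ((adj.unit.app (DGS.coneFun (prOne U r)) ≫ U.map g) x).f q ≫
        ((U.map q') x).f q = (φ x).f q := hψq_f x q
    erw [this, hφ]
    exact mappingCone.inl_v_desc_f _ _ _ _ p q hpq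
  refine ⟨q', hpo.inl_desc _ _ _, thetaq, ?_⟩
  intro x n u y hu hy
  set pel : cyclePairs U r x n := ⟨(u, y), hu, hy⟩ with hpel
  refine ⟨(theta F U adj (prOne U r) g x).v n (n-1) (by omega) pel, 0, ?_, ?_⟩
  · -- `d a = (U jbar) u`
    have key : (theta F U adj (prOne U r) g x).v n (n-1) (by omega) ≫
        ((U.obj D) x).d (n-1) n = ((prOne U r) x).f n ≫ ((U.map jbar) x).f n := by
      dsimp only [theta]
      erw [Cochain.comp_zero_cochain_v, Cochain.ofHom_v, Category.assoc]
      erw [show ((adj.unit.app (DGS.coneFun (prOne U r)) ≫ U.map g) x).f (n-1) ≫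
          ((U.obj D) x).d (n-1) n =
          (mappingCone ((prOne U r) x)).d (n-1) n ≫ (ψ x).f n from (ψ x).comm (n-1) n,
        ← Category.assoc,
        mappingCone.inl_v_d ((prOne U r) x) n (n-1) (n+1) (by omega) (by omega)]
      have hd0 : ((cyclesCone U r) x).d n (n+1) = 0 := rfl
      rw [hd0, zero_comp, sub_zero]; erw [Category.assoc, hbar_f x n]
    have hk := LinearMap.congr_fun (congr_arg ModuleCat.Hom.hom key) pel
    simp only [ModuleCat.hom_comp, LinearMap.comp_apply] at hk
    exact hk
  · -- `(U q') a - d 0 = y`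
    rw [map_zero, sub_zero]
    have hk := LinearMap.congr_fun (congr_arg ModuleCat.Hom.hom
      (Cochain.congr_v (thetaq x) n (n-1) (by omega))) pel
    rw [Cochain.comp_zero_cochain_v, Cochain.ofHom_v] at hk
    have h2 : (prTwoT U r x).v n (n-1) (by omega) pel = y := by
      simp only [prTwoT, Cochain.mk_v, cyclesCone, HomologicalComplex.XIsoOfEq,
        eqToIso.hom, ModuleCat.comp_apply, Function.comp_apply]
      rw [eqToHom_refl]
      rfl
    rw [← h2, ← hk]
    rfl

end
end
end
end
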